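/- Consider $p = P(X \geq \gamma \text{ or } X \leq -k\gamma)$ with $X \sim N(0,1)$ and constant $1 < k < 3$, estimated by IS with distribution $N(\gamma,1)$. Then $\tilde E(Z^2)/p^2$ grows exponentially in $\gamma^2$ (specifically, like $e^{(3-k)(k+1)\gamma^2/2}$ up to polynomial factors), so the estimator is not asymptotically efficient. -/

import Mathlib

open MeasureTheory Real Set Filter

/-- Standard normal tail function. -/
noncomputable def PhiBar (x : ℝ) : ℝ :=
  ∫ t in Ici x, (Real.sqrt (2 * π))⁻¹ * Real.exp (-t ^ 2 / 2)

/-- Second moment of the one-point IS estimator for `P(X ≥ γ or X ≤ -kγ)`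
under the IS distribution `N(γ,1)`. -/
noncomputable def secondMoment (k γ : ℝ) : ℝ :=
  ∫ x in {x : ℝ | γ ≤ x ∨ x ≤ -k * γ},
    (Real.exp (-γ * x + γ ^ 2 / 2)) ^ 2 *
      ((Real.sqrt (2 * π))⁻¹ * Real.exp (-(x - γ) ^ 2 / 2))

noncomputable def gss (x : ℝ) : ℝ := (Real.sqrt (2 * π))⁻¹ * Real.exp (-x ^ 2 / 2)

lemma cst_pos : 0 < (Real.sqrt (2 * π))⁻¹ := by
  positivity

lemma gss_pos (x : ℝ) : 0 < gss x := by
  unfold gss; positivity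

lemma integrable_gauss : Integrable (fun t : ℝ => Real.exp (-t ^ 2 / 2)) := by
  have := integrable_exp_neg_mul_sq (b := 1/2) (by norm_num)
  refine this.congr ?_
  filter_upwards with x
  ring_nf

lemma integrable_gss : Integrable gss := by
  unfold gss
  exact integrable_gauss.const_mul _

lemma measure_theory_map_add_right (a : ℝ) :
    Measure.map (fun x : ℝ => x + a) volume = volume :=
  Measure.IsAddRightInvariant.map_add_right_eq_self a

lemma setIntegral_Ici_add (f : ℝ → ℝ) (a c : ℝ) :
    ∫ x in Ici c, f (x + a) = ∫ x in Ici (c + a), f x := by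
  have A : MeasurableEmbedding (fun x : ℝ => x + a) :=
    (Homeomorph.addRight a).isClosedEmbedding.measurableEmbedding
  have h := A.setIntegral_map (μ := volume) f (Ici (c + a))
  rw [measure_theory_map_add_right] at h
  rw [h, Set.preimage_add_const_Ici]
  norm_num

lemma setIntegral_Iic_add (f : ℝ → ℝ) (a c : ℝ) :
    ∫ x in Iic c, f (x + a) = ∫ x in Iic (c + a), f x := by
  have A : MeasurableEmbedding (fun x : ℝ => x + a) :=
    (Homeomorph.addRight a).isClosedEmbedding.measurableEmbedding
  have h := A.setIntegral_map (μ := volume) f (Iic (c + a))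
  rw [measure_theory_map_add_right] at h
  rw [h, Set.preimage_add_const_Iic]
  norm_num



lemma PhiBar_eq (x : ℝ) : PhiBar x = ∫ t in Ici x, gss t := rfl

lemma PhiBar_nonneg (x : ℝ) : 0 ≤ PhiBar x := by
  rw [PhiBar_eq]
  exact setIntegral_nonneg measurableSet_Ici (fun t _ => (gss_pos t).le)

lemma PhiBar_anti {x y : ℝ} (h : x ≤ y) : PhiBar y ≤ PhiBar x := by
  rw [PhiBar_eq, PhiBar_eq]
  refine setIntegral_mono_set integrable_gss.integrableOn ?_ ?_
  · filter_upwards with t using (gss_pos t).le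
  · exact HasSubset.Subset.eventuallyLE (Ici_subset_Ici.mpr h)

lemma integral_mul_gauss (x : ℝ) :
    ∫ t in Ioi x, t * Real.exp (-t ^ 2 / 2) = Real.exp (-x ^ 2 / 2) := by
  have hderiv : ∀ t ∈ Ici x, HasDerivAt (fun u : ℝ => -Real.exp (-u ^ 2 / 2))
      (t * Real.exp (-t ^ 2 / 2)) t := by
    intro t _
    have h1 : HasDerivAt (fun u : ℝ => -u ^ 2 / 2) (-t) t := by
      have := ((hasDerivAt_pow 2 t).neg).div_const 2
      simpa using this.congr_deriv (by push_cast; ring)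
    have := (Real.hasDerivAt_exp (-t ^ 2 / 2)).comp t h1
    exact (this.neg.congr_deriv (by ring))
  have hint : IntegrableOn (fun t : ℝ => t * Real.exp (-t ^ 2 / 2)) (Ioi x) := by
    have : Integrable (fun t : ℝ => t * Real.exp (-(1/2) * t ^ 2)) := by
      simpa using integrable_mul_exp_neg_mul_sq (b := 1/2) (by norm_num)
    refine (this.congr ?_).integrableOn
    filter_upwards with t
    ring_nf
  have hlim : Tendsto (fun u : ℝ => -Real.exp (-u ^ 2 / 2)) atTop (nhds 0) := by
    rw [show (0:ℝ) = -0 by norm_num]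
    refine Tendsto.neg ?_
    have : Tendsto (fun u : ℝ => -u ^ 2 / 2) atTop atBot := by
      apply Tendsto.atBot_div_const (by norm_num)
      exact tendsto_neg_atBot_iff.mpr (tendsto_pow_atTop two_ne_zero)
    exact Real.tendsto_exp_atBot.comp this
  have := integral_Ioi_of_hasDerivAt_of_tendsto' hderiv hint hlim
  rw [this]; ring

lemma PhiBar_upper {x : ℝ} (hx : 0 < x) :
    PhiBar x ≤ (Real.sqrt (2 * π))⁻¹ * (Real.exp (-x ^ 2 / 2) / x) := by
  rw [PhiBar]
  rw [show (∫ t in Ici x, (Real.sqrt (2 * π))⁻¹ * Real.exp (-t ^ 2 / 2))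
      = (Real.sqrt (2 * π))⁻¹ * ∫ t in Ici x, Real.exp (-t ^ 2 / 2) from
    integral_const_mul _ _]
  refine mul_le_mul_of_nonneg_left ?_ cst_pos.le
  rw [integral_Ici_eq_integral_Ioi]
  have hint1 : IntegrableOn (fun t : ℝ => Real.exp (-t ^ 2 / 2)) (Ioi x) :=
    integrable_gauss.integrableOn
  have hint2 : IntegrableOn (fun t : ℝ => (t / x) * Real.exp (-t ^ 2 / 2)) (Ioi x) := by
    have : Integrable (fun t : ℝ => t * Real.exp (-(1/2) * t ^ 2)) := by
      simpa using integrable_mul_exp_neg_mul_sq (b := 1/2) (by norm_num)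
    have h2 := (this.congr (by filter_upwards with t; ring_nf :
      (fun t : ℝ => t * Real.exp (-(1/2) * t ^ 2)) =ᵐ[volume]
        (fun t : ℝ => t * Real.exp (-t ^ 2 / 2)))).const_mul x⁻¹
    refine (h2.congr ?_).integrableOn
    filter_upwards with t
    ring
  have hle : ∫ t in Ioi x, Real.exp (-t ^ 2 / 2)
      ≤ ∫ t in Ioi x, (t / x) * Real.exp (-t ^ 2 / 2) := by
    refine setIntegral_mono_on hint1 hint2 measurableSet_Ioi ?_
    intro t ht
    have h1 : (1 : ℝ) ≤ t / x := (one_le_div hx).mpr (le_of_lt ht)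
    nlinarith [Real.exp_pos (-t ^ 2 / 2)]
  refine hle.trans ?_
  have : ∫ t in Ioi x, (t / x) * Real.exp (-t ^ 2 / 2)
      = x⁻¹ * ∫ t in Ioi x, t * Real.exp (-t ^ 2 / 2) := by
    rw [← integral_const_mul]
    congr 1 with t
    ring
  rw [this, integral_mul_gauss]
  rw [div_eq_inv_mul]
  ring_nf
  exact le_rfl

lemma PhiBar_lower {x : ℝ} (hx : 1 ≤ x) :
    (Real.sqrt (2 * π))⁻¹ * Real.exp (-(3:ℝ)/2) * (Real.exp (-x ^ 2 / 2) / x)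
      ≤ PhiBar x := by
  have hx0 : 0 < x := lt_of_lt_of_le one_pos hx
  rw [PhiBar_eq]
  have hsub : Icc x (x + 1/x) ⊆ Ici x := fun t ht => ht.1
  have step1 : ∫ t in Icc x (x + 1/x), gss t ≤ ∫ t in Ici x, gss t := by
    refine setIntegral_mono_set integrable_gss.integrableOn ?_
      (HasSubset.Subset.eventuallyLE hsub)
    filter_upwards with t using (gss_pos t).le
  refine le_trans ?_ step1
  have step2 : (1/x) * gss (x + 1/x) ≤ ∫ t in Icc x (x + 1/x), gss t := by
    have hconst : ∫ _ in Icc x (x + 1/x), gss (x + 1/x) ∂volume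
        = (1/x) * gss (x + 1/x) := by
      rw [setIntegral_const, measureReal_def, Real.volume_Icc, smul_eq_mul]
      congr 1
      rw [ENNReal.toReal_ofReal (by have := one_div_pos.mpr hx0; linarith : (0:ℝ) ≤ x + 1/x - x)]
      ring
    rw [← hconst]
    refine setIntegral_mono_on ((integrableOn_const_iff (C := gss (x + 1/x))).mpr ?_)
      integrable_gss.integrableOn measurableSet_Icc ?_
    · right; rw [Real.volume_Icc]; exact ENNReal.ofReal_lt_top
    · intro t ht
      unfold gss
      refine mul_le_mul_of_nonneg_left ?_ cst_pos.le
      refine Real.exp_le_exp.mpr ?_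
      have ht1 : t ≤ x + 1/x := ht.2
      have ht0 : 0 ≤ t := le_trans hx0.le ht.1
      nlinarith
  refine le_trans ?_ step2
  unfold gss
  have hexp : Real.exp (-(x + 1/x) ^ 2 / 2)
      = Real.exp (-x ^ 2 / 2) * Real.exp (-1 - x⁻¹ ^ 2 / 2) := by
    rw [← Real.exp_add]
    congr 1
    field_simp
    ring
  have h32 : Real.exp (-(3:ℝ)/2) ≤ Real.exp (-1 - x⁻¹ ^ 2 / 2) := by
    refine Real.exp_le_exp.mpr ?_
    have : x⁻¹ ≤ 1 := by
      rw [inv_le_one_iff₀]; right; exact hx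
    nlinarith [inv_pos.mpr hx0]
  rw [hexp]
  have hpos : 0 < Real.exp (-x ^ 2 / 2) := Real.exp_pos _
  calc (Real.sqrt (2 * π))⁻¹ * Real.exp (-(3:ℝ)/2) * (Real.exp (-x ^ 2 / 2) / x)
      ≤ (Real.sqrt (2 * π))⁻¹ * Real.exp (-1 - x⁻¹ ^ 2 / 2) * (Real.exp (-x ^ 2 / 2) / x) := by
        refine mul_le_mul_of_nonneg_right (mul_le_mul_of_nonneg_left h32 cst_pos.le) (by positivity)
    _ = 1 / x * ((Real.sqrt (2 * π))⁻¹ * (Real.exp (-x ^ 2 / 2) * Real.exp (-1 - x⁻¹ ^ 2 / 2))) := by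
        ring

lemma exp_key (cc p q r : ℝ) :
    Real.exp p * Real.exp q * (cc * Real.exp r) = cc * Real.exp (p + q + r) := by
  rw [Real.exp_add, Real.exp_add]; ring

lemma exp_key2 (cc p r : ℝ) :
    Real.exp p * (cc * Real.exp r) = cc * Real.exp (p + r) := by
  rw [Real.exp_add]; ring

lemma integrand_eq (γ x : ℝ) :
    (Real.exp (-γ * x + γ ^ 2 / 2)) ^ 2 *
      ((Real.sqrt (2 * π))⁻¹ * Real.exp (-(x - γ) ^ 2 / 2))
    = Real.exp (γ ^ 2) * gss (x + γ) := by
  unfold gss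
  rw [sq (Real.exp _), exp_key, exp_key2]
  congr 1
  ring

lemma PhiBar_Iic (c : ℝ) : ∫ x in Iic c, gss x = PhiBar (-c) := by
  have heven : ∀ x : ℝ, gss (-x) = gss x := by
    intro x; unfold gss; congr 2; ring
  rw [show (∫ x in Iic c, gss x) = ∫ x in Iic c, gss (-x) by
      exact setIntegral_congr_fun measurableSet_Iic fun x _ => (heven x).symm]
  rw [integral_comp_neg_Iic c gss, PhiBar_eq, integral_Ici_eq_integral_Ioi]

lemma secondMoment_eq {k γ : ℝ} (hk : 1 < k) (hγ : 0 < γ) :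
    secondMoment k γ = Real.exp (γ ^ 2) * (PhiBar (2 * γ) + PhiBar ((k - 1) * γ)) := by
  unfold secondMoment
  have hset : {x : ℝ | γ ≤ x ∨ x ≤ -k * γ} = Ici γ ∪ Iic (-k * γ) := by
    ext x; simp [Set.mem_union]
  rw [hset]
  rw [setIntegral_congr_fun (by measurability) (fun x _ => integrand_eq γ x)]
  have hdisj : Disjoint (Ici γ) (Iic (-k * γ)) := by
    refine (Iic_disjoint_Ici.mpr ?_).symm
    intro h
    nlinarith
  have hint : Integrable (fun x : ℝ => Real.exp (γ ^ 2) * gss (x + γ)) :=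
    (integrable_gss.comp_add_right γ).const_mul _
  rw [setIntegral_union hdisj measurableSet_Iic hint.integrableOn hint.integrableOn]
  rw [integral_const_mul, integral_const_mul]
  rw [setIntegral_Ici_add gss γ γ, setIntegral_Iic_add gss γ (-k * γ)]
  rw [show γ + γ = 2 * γ by ring, PhiBar_Iic]
  rw [show -(-k * γ + γ) = (k - 1) * γ by ring, ← PhiBar_eq]
  ring

lemma ratio_formula (A B u v γ : ℝ) (hγ : γ ≠ 0) (hB : B ≠ 0) :
    (A * (Real.exp u / γ)) / (B * (Real.exp v / γ)) ^ 2
      = (A / B ^ 2) * (γ * Real.exp (u - 2 * v)) := by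
  have h : Real.exp u = Real.exp (u - 2 * v) * (Real.exp v * Real.exp v) := by
    rw [← Real.exp_add, ← Real.exp_add]; ring_nf
  field_simp
  rw [h]; ring

lemma conv_helper (A γ b : ℝ) (hγ : γ ≠ 0) (hb : b ≠ 0) :
    Real.exp (γ ^ 2) * (A * (Real.exp (-((b * γ)) ^ 2 / 2) / (b * γ)))
      = (A / b) * (Real.exp (γ ^ 2 - b ^ 2 * γ ^ 2 / 2) / γ) := by
  rw [show γ ^ 2 - b ^ 2 * γ ^ 2 / 2 = γ ^ 2 + -(b * γ) ^ 2 / 2 by ring, Real.exp_add]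
  field_simp

lemma main_bounds (k : ℝ) (hk1 : 1 < k) (hk3 : k < 3) :
    ∃ c₁ c₂ : ℝ, 0 < c₁ ∧ 0 < c₂ ∧ ∀ᶠ γ in atTop,
      c₁ * (γ * Real.exp ((3 - k) * (k + 1) * γ ^ 2 / 2)) ≤
          secondMoment k γ / (PhiBar γ + PhiBar (k * γ)) ^ 2 ∧
      secondMoment k γ / (PhiBar γ + PhiBar (k * γ)) ^ 2 ≤
          c₂ * (γ * Real.exp ((3 - k) * (k + 1) * γ ^ 2 / 2)) := by
  set cst := (Real.sqrt (2 * π))⁻¹ with hcst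
  have hcst0 : 0 < cst := cst_pos
  set Cl : ℝ := cst * Real.exp (-(3:ℝ)/2) with hCl
  set Cu : ℝ := cst with hCu
  have hCl0 : 0 < Cl := by positivity
  have hCu0 : 0 < Cu := hcst0
  have hkm : 0 < k - 1 := by linarith
  refine ⟨(Cl / (k-1)) / (2 * Cu) ^ 2, ((2 * Cu) / (k-1)) / Cl ^ 2,
    by positivity, by positivity, ?_⟩
  filter_upwards [eventually_ge_atTop (1:ℝ), eventually_ge_atTop ((k-1)⁻¹)]
    with γ hγ1 hγ2
  have hγ0 : 0 < γ := lt_of_lt_of_le one_pos hγ1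
  have hkγ1 : 1 ≤ (k - 1) * γ := by
    calc (1:ℝ) = (k-1) * (k-1)⁻¹ := by field_simp
    _ ≤ (k-1) * γ := by exact mul_le_mul_of_nonneg_left hγ2 hkm.le
  have hkγ0 : 0 < (k - 1) * γ := lt_of_lt_of_le one_pos hkγ1
  have hN := secondMoment_eq hk1 hγ0
  set u : ℝ := γ ^ 2 - (k-1) ^ 2 * γ ^ 2 / 2 with hu
  set v : ℝ := -γ ^ 2 / 2 with hv
  -- denominator bounds
  have h_plow : Cl * (Real.exp v / γ) ≤ PhiBar γ + PhiBar (k * γ) := by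
    have h1 := PhiBar_lower hγ1
    have h2 := PhiBar_nonneg (k * γ)
    have : Cl * (Real.exp v / γ) = cst * Real.exp (-(3:ℝ)/2) * (Real.exp (-γ^2/2) / γ) := by
      rw [hCl, hv]
    linarith [this ▸ le_refl (Cl * (Real.exp v / γ))]
  have h_pup : PhiBar γ + PhiBar (k * γ) ≤ (2 * Cu) * (Real.exp v / γ) := by
    have h1 := PhiBar_upper hγ0
    have h2 : PhiBar (k * γ) ≤ PhiBar γ := PhiBar_anti (by nlinarith)
    have : (2 * Cu) * (Real.exp v / γ) = 2 * (cst * (Real.exp (-γ^2/2) / γ)) := by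
      rw [hCu, hv]; ring
    rw [this]
    linarith
  have hp_pos : 0 < PhiBar γ + PhiBar (k * γ) := by
    refine lt_of_lt_of_le ?_ h_plow
    positivity
  -- numerator bounds
  have hNlow : (Cl / (k-1)) * (Real.exp u / γ) ≤ secondMoment k γ := by
    rw [hN, ← conv_helper Cl γ (k-1) hγ0.ne' hkm.ne']
    have h1 := PhiBar_lower hkγ1
    have h2 := PhiBar_nonneg (2 * γ)
    have h3 : (0:ℝ) < Real.exp (γ ^ 2) := Real.exp_pos _
    have h4 : cst * Real.exp (-(3:ℝ)/2) * (Real.exp (-((k-1)*γ) ^ 2 / 2) / ((k-1)*γ))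
        ≤ PhiBar (2*γ) + PhiBar ((k-1)*γ) := by linarith
    refine mul_le_mul_of_nonneg_left ?_ h3.le
    rw [hCl]
    exact h4
  have hNup : secondMoment k γ ≤ ((2 * Cu) / (k-1)) * (Real.exp u / γ) := by
    rw [hN]
    have hconv : Real.exp (γ ^ 2) * ((2 * Cu) * (Real.exp (-((k-1) * γ) ^ 2 / 2) / ((k-1) * γ)))
        = ((2 * Cu) / (k-1)) * (Real.exp u / γ) := conv_helper (2 * Cu) γ (k-1) hγ0.ne' hkm.ne'
    rw [← hconv]
    refine mul_le_mul_of_nonneg_left ?_ (Real.exp_pos _).le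
    have h1 : PhiBar (2 * γ) ≤ Cu * (Real.exp (-(2*γ) ^ 2 / 2) / (2*γ)) := PhiBar_upper (by linarith)
    have h2 : PhiBar ((k-1) * γ) ≤ Cu * (Real.exp (-((k-1)*γ) ^ 2 / 2) / ((k-1)*γ)) :=
      PhiBar_upper hkγ0
    have h3 : Real.exp (-(2*γ) ^ 2 / 2) / (2*γ) ≤ Real.exp (-((k-1)*γ) ^ 2 / 2) / ((k-1)*γ) := by
      refine div_le_div₀ (Real.exp_pos _).le ?_ hkγ0 ?_
      · refine Real.exp_le_exp.mpr ?_
        nlinarith [mul_nonneg (mul_nonneg (by linarith : (0:ℝ) ≤ 3 - k)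
          (by linarith : (0:ℝ) ≤ k + 1)) (sq_nonneg γ)]
      · nlinarith
    have h4 : Cu * (Real.exp (-(2*γ) ^ 2 / 2) / (2*γ))
        ≤ Cu * (Real.exp (-((k-1)*γ) ^ 2 / 2) / ((k-1)*γ)) :=
      mul_le_mul_of_nonneg_left h3 hCu0.le
    calc PhiBar (2*γ) + PhiBar ((k-1)*γ)
        ≤ Cu * (Real.exp (-((k-1)*γ) ^ 2 / 2) / ((k-1)*γ))
          + Cu * (Real.exp (-((k-1)*γ) ^ 2 / 2) / ((k-1)*γ)) := by linarith
      _ = (2 * Cu) * (Real.exp (-((k-1)*γ) ^ 2 / 2) / ((k-1)*γ)) := by ring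
  have hexp_eq : u - 2 * v = (3 - k) * (k + 1) * γ ^ 2 / 2 := by
    rw [hu, hv]; ring
  have hNnn : 0 ≤ secondMoment k γ :=
    le_trans (by positivity) hNlow
  constructor
  · have heq : (Cl / (k-1)) / (2 * Cu) ^ 2 * (γ * Real.exp ((3 - k) * (k + 1) * γ ^ 2 / 2))
        = ((Cl / (k-1)) * (Real.exp u / γ)) / ((2 * Cu) * (Real.exp v / γ)) ^ 2 := by
      rw [ratio_formula _ _ u v γ hγ0.ne' (by positivity), hexp_eq]
    rw [heq]
    refine div_le_div₀ hNnn hNlow (pow_pos hp_pos 2) ?_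
    exact pow_le_pow_left₀ hp_pos.le h_pup 2
  · have heq : ((2 * Cu) / (k-1)) / Cl ^ 2 * (γ * Real.exp ((3 - k) * (k + 1) * γ ^ 2 / 2))
        = (((2 * Cu) / (k-1)) * (Real.exp u / γ)) / (Cl * (Real.exp v / γ)) ^ 2 := by
      rw [ratio_formula _ _ u v γ hγ0.ne' hCl0.ne', hexp_eq]
    rw [heq]
    refine div_le_div₀ (by positivity) hNup (by positivity) ?_
    exact pow_le_pow_left₀ (by positivity) h_plow 2


/-- for `1 < k < 3`, the relative second moment `Ẽ(Z²)/p²` grows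
exponentially in `γ²`, like `γ e^{(3-k)(k+1)γ²/2}` up to constants, so the
one-point IS estimator is not asymptotically efficient (the ratio
`log(Ẽ(Z²)/p²)/(-log p)` does not tend to 0). -/
theorem IS_not_efficient_for_k_lt_three (k : ℝ) (hk1 : 1 < k) (hk3 : k < 3) :
    (∃ c₁ c₂ : ℝ, 0 < c₁ ∧ 0 < c₂ ∧ ∀ᶠ γ in atTop,
      c₁ * (γ * Real.exp ((3 - k) * (k + 1) * γ ^ 2 / 2)) ≤
          secondMoment k γ / (PhiBar γ + PhiBar (k * γ)) ^ 2 ∧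
      secondMoment k γ / (PhiBar γ + PhiBar (k * γ)) ^ 2 ≤
          c₂ * (γ * Real.exp ((3 - k) * (k + 1) * γ ^ 2 / 2))) ∧
    ¬ Tendsto (fun γ =>
        Real.log (secondMoment k γ / (PhiBar γ + PhiBar (k * γ)) ^ 2) /
          (-Real.log (PhiBar γ + PhiBar (k * γ)))) atTop (nhds 0) := by
  obtain ⟨c₁, c₂, hc₁, hc₂, hev⟩ := main_bounds k hk1 hk3
  refine ⟨⟨c₁, c₂, hc₁, hc₂, hev⟩, ?_⟩
  intro hT
  have hcst0 : 0 < (Real.sqrt (2 * π))⁻¹ := cst_pos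
  set Cu : ℝ := (Real.sqrt (2 * π))⁻¹ with hCu
  set Cl : ℝ := (Real.sqrt (2 * π))⁻¹ * Real.exp (-(3:ℝ)/2) with hCl
  have hCl0 : 0 < Cl := by positivity
  set E : ℝ := (3 - k) * (k + 1) / 2 with hE
  have hE0 : 0 < E := by
    have h1 : (0:ℝ) < 3 - k := by linarith
    have h2 : (0:ℝ) < k + 1 := by linarith
    positivity
  have key : ∀ᶠ γ in atTop, E ≤
      Real.log (secondMoment k γ / (PhiBar γ + PhiBar (k * γ)) ^ 2) /
        (-Real.log (PhiBar γ + PhiBar (k * γ))) := by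
    filter_upwards [hev.mono (fun γ h => h.1), eventually_ge_atTop (1:ℝ),
      tendsto_log_atTop.eventually_ge_atTop (-Real.log c₁),
      eventually_gt_atTop (2 * Cu), eventually_ge_atTop (2 / Cl)]
      with γ hRlow hγ1 hlogγ hγCu hγCl
    have hγ0 : 0 < γ := lt_of_lt_of_le one_pos hγ1
    set p : ℝ := PhiBar γ + PhiBar (k * γ) with hp
    set R : ℝ := secondMoment k γ / p ^ 2 with hR
    -- p bounds
    have hp_up : p ≤ 2 * Cu * (Real.exp (-γ ^ 2 / 2) / γ) := by
      have h1 := PhiBar_upper hγ0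
      have h2 : PhiBar (k * γ) ≤ PhiBar γ := PhiBar_anti (by nlinarith)
      have h3 : 2 * Cu * (Real.exp (-γ ^ 2 / 2) / γ)
          = 2 * ((Real.sqrt (2 * π))⁻¹ * (Real.exp (-γ ^ 2 / 2) / γ)) := by rw [hCu]; ring
      rw [hp, h3]
      linarith
    have hp_low : Cl * (Real.exp (-γ ^ 2 / 2) / γ) ≤ p := by
      have h1 := PhiBar_lower hγ1
      have h2 := PhiBar_nonneg (k * γ)
      rw [hp, hCl]
      linarith
    have hp_pos : 0 < p := lt_of_lt_of_le (by positivity) hp_low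
    have hp_lt1 : p < 1 := by
      have h1 : Real.exp (-γ ^ 2 / 2) ≤ 1 := Real.exp_le_one_iff.mpr (by nlinarith)
      have h2 : 2 * Cu * (Real.exp (-γ ^ 2 / 2) / γ) ≤ 2 * Cu / γ := by
        have h5 : Real.exp (-γ ^ 2 / 2) / γ ≤ 1 / γ :=
          div_le_div₀ zero_le_one h1 hγ0 le_rfl
        calc 2 * Cu * (Real.exp (-γ ^ 2 / 2) / γ) ≤ 2 * Cu * (1 / γ) :=
              mul_le_mul_of_nonneg_left h5 (by positivity)
          _ = 2 * Cu / γ := by ring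
      have h3 : 2 * Cu / γ < 1 := (div_lt_one hγ0).mpr hγCu
      linarith
    have hlogp_neg : Real.log p < 0 := Real.log_neg hp_pos hp_lt1
    -- lower bound on p by exp(-γ^2)
    have hClγ : 2 ≤ γ * Cl := (div_le_iff₀ hCl0).mp hγCl
    have h1exp : γ ^ 2 / 2 ≤ Real.exp (γ ^ 2 / 2) := by
      have := Real.add_one_le_exp (γ ^ 2 / 2); linarith
    have hγle : γ ≤ Cl * Real.exp (γ ^ 2 / 2) := by
      nlinarith [mul_le_mul_of_nonneg_left h1exp hCl0.le,
        mul_nonneg hγ0.le (sub_nonneg.mpr hClγ)]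
    have hp_ge : Real.exp (-γ ^ 2) ≤ p := by
      refine le_trans ?_ hp_low
      rw [show Cl * (Real.exp (-γ ^ 2 / 2) / γ) = Cl * Real.exp (-γ ^ 2 / 2) / γ by ring,
        le_div_iff₀ hγ0]
      have h2 : γ * Real.exp (-γ ^ 2) ≤ Cl * Real.exp (γ ^ 2 / 2) * Real.exp (-γ ^ 2) :=
        mul_le_mul_of_nonneg_right hγle (Real.exp_pos _).le
      have h3 : Cl * Real.exp (γ ^ 2 / 2) * Real.exp (-γ ^ 2) = Cl * Real.exp (-γ ^ 2 / 2) := by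
        rw [mul_assoc, ← Real.exp_add]
        congr 2
        ring
      rw [h3] at h2
      linarith [h2]
    have hlogp_ge : -γ ^ 2 ≤ Real.log p := by
      have := Real.log_le_log (Real.exp_pos (-γ ^ 2)) hp_ge
      rwa [Real.log_exp] at this
    -- R bounds
    have hRlow' : c₁ * (γ * Real.exp ((3 - k) * (k + 1) * γ ^ 2 / 2)) ≤ R := hRlow
    have hR_pos : 0 < R := lt_of_lt_of_le (by positivity) hRlow'
    have hlogR : E * γ ^ 2 ≤ Real.log R := by
      have h0 : (0:ℝ) < c₁ * (γ * Real.exp ((3 - k) * (k + 1) * γ ^ 2 / 2)) := by positivity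
      have h1 := Real.log_le_log h0 hRlow'
      rw [Real.log_mul hc₁.ne' (by positivity),
        Real.log_mul hγ0.ne' (Real.exp_ne_zero _), Real.log_exp] at h1
      have h2 : E * γ ^ 2 = (3 - k) * (k + 1) * γ ^ 2 / 2 := by rw [hE]; ring
      linarith
    have hlogR_nn : 0 ≤ Real.log R := le_trans (by positivity) hlogR
    have h5 : E * γ ^ 2 / γ ^ 2 ≤ Real.log R / (-Real.log p) :=
      div_le_div₀ hlogR_nn hlogR (by linarith) (by linarith)
    have h6 : E * γ ^ 2 / γ ^ 2 = E := by field_simp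
    rw [h6] at h5
    exact h5
  have hlt := hT.eventually_lt_const hE0
  obtain ⟨γ, h1, h2⟩ := (key.and hlt).exists
  linarith
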